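/- arXiv:1006.5124 — 3 statements merged into one kernel-verified Lean document; each statement's English description precedes it below -/
import Mathlib

section
/- Let r, l be positive integers and let (v₁,…,v_r) and (w₁,…,w_l) be sequences of nonnegative integers with Σv_i = Σw_j = N ≤ r·l, such that each v_i ∈ {v, v+1} where v = ⌊N/r⌋ and each w_j ∈ {w, w+1} where w = ⌊N/l⌋. Then there exists a bipartite graph on r right vertices and l left vertices whose right degree sequence is (v₁,…,v_r) and whose left degree sequence is (w₁,…,w_l). -/
open Finset

private lemma count_mod_range (r : ℕ) (hr : 0 < r) (N i₀ : ℕ) (hi : i₀ < r) :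
    ((Finset.range N).filter (fun k => k % r = i₀)).card
      = N / r + if i₀ < N % r then 1 else 0 := by
  induction N with
  | zero => simp
  | succ n ih =>
      have key : n + 1 = (n % r + 1) + r * (n / r) := by
        conv_lhs => rw [← Nat.div_add_mod n r]
        ring
      have e1 : (n + 1) % r = (n % r + 1) % r := by
        rw [key, Nat.add_mul_mod_self_left]
      have e2 : (n + 1) / r = (n % r + 1) / r + n / r := by
        rw [key, Nat.add_mul_div_left _ _ hr]
      have hmod : n % r < r := Nat.mod_lt _ hr
      rw [Finset.range_add_one, Finset.filter_insert]
      by_cases h : n % r = i₀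
      · rw [if_pos h, Finset.card_insert_of_notMem (by simp), ih, e1, e2]
        rcases Nat.lt_or_ge (n % r + 1) r with hc | hc
        · rw [Nat.mod_eq_of_lt hc, Nat.div_eq_of_lt hc]
          split_ifs <;> omega
        · have hc' : n % r + 1 = r := by omega
          rw [hc', Nat.mod_self, Nat.div_self hr]
          split_ifs <;> omega
      · rw [if_neg h, ih, e1, e2]
        rcases Nat.lt_or_ge (n % r + 1) r with hc | hc
        · rw [Nat.mod_eq_of_lt hc, Nat.div_eq_of_lt hc]
          split_ifs <;> omega
        · have hc' : n % r + 1 = r := by omega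
          rw [hc', Nat.mod_self, Nat.div_self hr]
          split_ifs <;> omega

/-- Given degree sequences `(v i)` on `r` right vertices and `(w j)` on `l` left vertices,
each summing to `N ≤ r * l`, with every `v i ∈ {⌊N/r⌋, ⌊N/r⌋+1}` and every
`w j ∈ {⌊N/l⌋, ⌊N/l⌋+1}`, there is a bipartite graph realizing these degree sequences. -/
theorem stmt_1 (r l N : ℕ) (hr : 0 < r) (hl : 0 < l) (hNrl : N ≤ r * l)
    (v : Fin r → ℕ) (w : Fin l → ℕ)
    (hv : ∑ i, v i = N) (hw : ∑ j, w j = N)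
    (hv' : ∀ i, v i = N / r ∨ v i = N / r + 1)
    (hw' : ∀ j, w j = N / l ∨ w j = N / l + 1) :
    ∃ E : Finset (Fin r × Fin l),
      (∀ i, (E.filter fun e => e.1 = i).card = v i) ∧
      (∀ j, (E.filter fun e => e.2 = j).card = w j) := by
  classical
  set a := N / r with ha
  set c := N % r with hc
  have hcr : c < r := Nat.mod_lt _ hr
  -- the number of `i` with `v i = a + 1` is `c`
  have hcount : (Finset.univ.filter (fun i : Fin r => v i = a + 1)).card = c := by
    have h1 : ∑ i, v i = ∑ i : Fin r, (a + if v i = a + 1 then 1 else 0) := by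
      apply Finset.sum_congr rfl
      intro i _
      rcases hv' i with h | h <;> simp [h]
    have h2 : ∑ i : Fin r, (a + if v i = a + 1 then 1 else 0)
        = r * a + (Finset.univ.filter (fun i : Fin r => v i = a + 1)).card := by
      rw [Finset.sum_add_distrib, Finset.sum_const, Finset.card_univ, Fintype.card_fin,
        smul_eq_mul, Finset.card_filter]
    have h3 : r * a + c = N := Nat.div_add_mod N r
    have h4 : r * a + (Finset.univ.filter (fun i : Fin r => v i = a + 1)).card = r * a + c := by
      rw [← h2, ← h1, hv, h3]
    exact Nat.add_left_cancel h4
  have card1 : Fintype.card {i : Fin r // v i = a + 1} = c := by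
    rw [Fintype.card_subtype]; exact hcount
  have card2 : Fintype.card {i : Fin r // (i : ℕ) < c} = c := by
    have e : {i : Fin r // (i : ℕ) < c} ≃ Fin c :=
      { toFun := fun x => ⟨x.1.1, x.2⟩
        invFun := fun y => ⟨⟨y.1, y.2.trans hcr⟩, y.2⟩
        left_inv := fun x => rfl
        right_inv := fun y => rfl }
    rw [Fintype.card_congr e, Fintype.card_fin]
  have e1 : {i : Fin r // v i = a + 1} ≃ {i : Fin r // (i : ℕ) < c} :=
    Fintype.equivOfCardEq (card1.trans card2.symm)
  have e2 : {i : Fin r // ¬ (v i = a + 1)} ≃ {i : Fin r // ¬ ((i : ℕ) < c)} :=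
    Fintype.equivOfCardEq (by
      rw [Fintype.card_subtype_compl, Fintype.card_subtype_compl, card1, card2])
  set σ : Fin r ≃ Fin r :=
    (Equiv.sumCompl (fun i : Fin r => v i = a + 1)).symm.trans
      ((e1.sumCongr e2).trans (Equiv.sumCompl (fun i : Fin r => (i : ℕ) < c))) with hσdef
  have hσ : ∀ i, (((σ i) : Fin r) : ℕ) < c ↔ v i = a + 1 := by
    intro i
    by_cases h : v i = a + 1
    · have : σ i = (e1 ⟨i, h⟩ : {i : Fin r // (i : ℕ) < c}).1 := by
        simp only [hσdef, Equiv.trans_apply, Equiv.sumCongr_apply]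
        rw [Equiv.sumCompl_symm_apply_of_pos (p := fun i : Fin r => v i = a + 1) h, Sum.map_inl,
          Equiv.sumCompl_apply_inl]
      rw [this]
      exact ⟨fun _ => h, fun _ => (e1 ⟨i, h⟩).2⟩
    · have : σ i = (e2 ⟨i, h⟩ : {i : Fin r // ¬ ((i : ℕ) < c)}).1 := by
        simp only [hσdef, Equiv.trans_apply, Equiv.sumCongr_apply]
        rw [Equiv.sumCompl_symm_apply_of_neg (p := fun i : Fin r => v i = a + 1) h, Sum.map_inr,
          Equiv.sumCompl_apply_inr]
      rw [this]
      exact ⟨fun hlt => absurd hlt (e2 ⟨i, h⟩).2, fun hv2 => absurd hv2 h⟩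
  -- partial sums of w
  set w' : ℕ → ℕ := fun j => if h : j < l then w ⟨j, h⟩ else 0 with hw'def
  set S : ℕ → ℕ := fun j => ∑ x ∈ Finset.range j, w' x with hSdef
  have hSmono : ∀ {x y : ℕ}, x ≤ y → S x ≤ S y := fun hxy =>
    Finset.sum_le_sum_of_subset (Finset.range_subset_range.2 hxy)
  have hS0 : S 0 = 0 := by simp [hSdef]
  have hSl : S l = N := by
    rw [hSdef]
    simp only []
    rw [← Fin.sum_univ_eq_sum_range, ← hw]
    apply Finset.sum_congr rfl
    intro j _
    simp [hw'def, j.isLt]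
  have hSsucc : ∀ j : Fin l, S ((j : ℕ) + 1) = S j + w j := by
    intro j
    rw [hSdef]
    simp only []
    rw [Finset.sum_range_succ]
    congr 1
    simp [hw'def, j.isLt]
  have hwle : ∀ j : Fin l, w j ≤ r := by
    intro j
    by_contra hcon
    push_neg at hcon
    have hdl : r ≤ N / l := by
      rcases hw' j with h | h <;> omega
    have h2 : r * l ≤ N := by
      calc r * l ≤ N / l * l := Nat.mul_le_mul_right l hdl
        _ ≤ N := Nat.div_mul_le_self N l
    have h3 : N = r * l := le_antisymm hNrl h2
    have h4 : N / l = r := by rw [h3, mul_comm, Nat.mul_div_cancel_left r hl]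
    have h5 : ∑ _j : Fin l, r < ∑ j, w j := by
      apply Finset.sum_lt_sum
      · intro i _
        rcases hw' i with h | h <;> omega
      · exact ⟨j, Finset.mem_univ j, by omega⟩
    rw [Finset.sum_const, Finset.card_univ, Fintype.card_fin, smul_eq_mul, hw, mul_comm] at h5
    omega
  -- the block function
  set blk : ℕ → ℕ := fun k => Nat.findGreatest (fun j => S j ≤ k) l with hblkdef
  have hblk : ∀ k, k < N → blk k < l ∧ S (blk k) ≤ k ∧ k < S (blk k + 1) := by
    intro k hk
    have h0 : S (blk k) ≤ k :=
      Nat.findGreatest_spec (P := fun j => S j ≤ k) (Nat.zero_le l)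
        (by show S 0 ≤ k; rw [hS0]; exact Nat.zero_le k)
    have hle : blk k ≤ l := Nat.findGreatest_le l
    have hlt : blk k < l := by
      rcases lt_or_eq_of_le hle with h | h
      · exact h
      · rw [h, hSl] at h0; omega
    have h2 : ¬ S (blk k + 1) ≤ k := by
      apply Nat.findGreatest_is_greatest (P := fun j => S j ≤ k) (n := l)
      · exact Nat.lt_succ_self _
      · omega
    exact ⟨hlt, h0, by omega⟩
  have hblk_eq : ∀ k, k < N → ∀ j : ℕ, S j ≤ k → k < S (j + 1) → blk k = j := by
    intro k hk j h1 h2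
    obtain ⟨hl1, hl2, hl3⟩ := hblk k hk
    rcases lt_trichotomy (blk k) j with h | h | h
    · have := hSmono (show blk k + 1 ≤ j by omega)
      omega
    · exact h
    · have := hSmono (show j + 1 ≤ blk k by omega)
      omega
  -- the edge map
  set f : ℕ → Fin r × Fin l :=
    fun k => (σ.symm ⟨k % r, Nat.mod_lt k hr⟩, ⟨blk k % l, Nat.mod_lt _ hl⟩) with hfdef
  have hinj : Set.InjOn f (Finset.range N) := by
    intro k hk k' hk' heq
    simp only [Finset.coe_range, Set.mem_Iio] at hk hk'
    have h1 : k % r = k' % r := by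
      have h := congrArg Prod.fst heq
      simp only [hfdef] at h
      exact congrArg Fin.val (σ.symm.injective h)
    obtain ⟨hb1, hb2, hb3⟩ := hblk k hk
    obtain ⟨hb1', hb2', hb3'⟩ := hblk k' hk'
    have h2 : blk k = blk k' := by
      have := congrArg (fun e => (Prod.snd e).val) heq
      simp only [hfdef] at this
      rwa [Nat.mod_eq_of_lt hb1, Nat.mod_eq_of_lt hb1'] at this
    set j : Fin l := ⟨blk k, hb1⟩ with hjdef
    have hup : S (blk k + 1) = S (blk k) + w j := hSsucc j
    have hwj : w j ≤ r := hwle j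
    rw [← h2] at hb2' hb3'
    have hd : (k - k') % r = 0 := Nat.sub_mod_eq_zero_of_mod_eq h1
    have hd' : (k' - k) % r = 0 := Nat.sub_mod_eq_zero_of_mod_eq h1.symm
    rcases le_total k k' with h | h
    · have : k' - k < r := by omega
      have : k' - k = 0 := by rw [← Nat.mod_eq_of_lt this, hd']
      omega
    · have : k - k' < r := by omega
      have : k - k' = 0 := by rw [← Nat.mod_eq_of_lt this, hd]
      omega
  refine ⟨(Finset.range N).image f, ?_, ?_⟩
  · intro i
    rw [Finset.filter_image, Finset.card_image_of_injOn (hinj.mono (by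
      intro x hx
      simp only [Finset.coe_filter, Set.mem_setOf_eq] at hx
      simpa using hx.1))]
    have hpred : ∀ k ∈ Finset.range N, ((f k).1 = i ↔ k % r = ((σ i : Fin r) : ℕ)) := by
      intro k _
      simp only [hfdef]
      rw [Equiv.symm_apply_eq, Fin.ext_iff]
    rw [Finset.filter_congr hpred, count_mod_range r hr N _ (σ i).isLt]
    rcases hv' i with h | h
    · have : ¬ (((σ i) : ℕ) < c) := by
        rw [hσ i]; omega
      rw [if_neg this]
      omega
    · have : ((σ i) : ℕ) < c := (hσ i).2 h
      rw [if_pos this]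
      omega
  · intro j
    rw [Finset.filter_image, Finset.card_image_of_injOn (hinj.mono (by
      intro x hx
      simp only [Finset.coe_filter, Set.mem_setOf_eq] at hx
      simpa using hx.1))]
    have hSjN : S ((j : ℕ) + 1) ≤ N := by
      rw [← hSl]; exact hSmono j.isLt
    have hpred : ∀ k ∈ Finset.range N,
        ((f k).2 = j ↔ (S (j : ℕ) ≤ k ∧ k < S ((j : ℕ) + 1))) := by
      intro k hk
      rw [Finset.mem_range] at hk
      obtain ⟨hb1, hb2, hb3⟩ := hblk k hk
      simp only [hfdef]
      rw [Fin.ext_iff]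
      simp only [Nat.mod_eq_of_lt hb1]
      constructor
      · intro heq
        rw [← heq]
        exact ⟨hb2, hb3⟩
      · intro ⟨h1', h2'⟩
        exact hblk_eq k hk j h1' h2'
    rw [Finset.filter_congr hpred]
    have : (Finset.range N).filter (fun k => S (j : ℕ) ≤ k ∧ k < S ((j : ℕ) + 1))
        = Finset.Ico (S (j : ℕ)) (S ((j : ℕ) + 1)) := by
      ext k
      simp only [Finset.mem_filter, Finset.mem_range, Finset.mem_Ico]
      omega
    rw [this, Nat.card_Ico, hSsucc j]
    omega
end

section
/- Let a, b ≥ 2 be integers and let h, k be integers with h ≥ a, k ≤ −2. Write h = α + m·a with −1 ≤ α ≤ a−2 and k = β − n·b with −1 ≤ β ≤ b−2 (such m, n, α, β exist and are unique). Set d = hb + ka and g = (a−1)(b−1). Assume ab − a − b − min(a,b) < d ≤ g − 1 and (α, β) ≠ (−1, −1). Then m = n. -/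
/-- With `a, b ≥ 2`, `h = α + m·a` (`-1 ≤ α ≤ a-2`), `k = β - n·b` (`-1 ≤ β ≤ b-2`),
`h ≥ a`, `k ≤ -2`, `d = hb + ka`, `g = (a-1)(b-1)`,
`ab - a - b - min a b < d ≤ g - 1` and `(α, β) ≠ (-1, -1)`, one has `m = n`. -/
theorem stmt_6 (a b h k α β m n d g : ℤ) (ha : 2 ≤ a) (hb : 2 ≤ b)
    (hh : a ≤ h) (hk : k ≤ -2)
    (hα : -1 ≤ α) (hα' : α ≤ a - 2) (hβ : -1 ≤ β) (hβ' : β ≤ b - 2)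
    (hm : h = α + m * a) (hn : k = β - n * b)
    (hd : d = h * b + k * a) (hg : g = (a - 1) * (b - 1))
    (h1 : a * b - a - b - min a b < d) (h2 : d ≤ g - 1)
    (hne : ¬(α = -1 ∧ β = -1)) : m = n := by
  have hd' : d = α*b + β*a + (m-n)*(a*b) := by
    rw [hd, hm, hn]; ring
  have hg' : g = (a-1)*(b-1) := hg
  rcases lt_trichotomy m n with h3 | h3 | h3
  · exfalso
    have ht : m - n ≤ -1 := by omega
    have hmin : min a b ≤ a := min_le_left a b
    nlinarith [mul_nonneg (by omega : (0:ℤ) ≤ a - 2 - α) (by omega : (0:ℤ) ≤ b),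
      mul_nonneg (by omega : (0:ℤ) ≤ b - 2 - β) (by omega : (0:ℤ) ≤ a),
      mul_le_mul_of_nonneg_right ht (by nlinarith : (0:ℤ) ≤ a*b)]
  · exact h3
  · exfalso
    have ht : 1 ≤ m - n := by omega
    have hab : (0:ℤ) ≤ a*b := by nlinarith
    have h4 := mul_le_mul_of_nonneg_right ht hab
    rcases (not_and_or.mp hne) with hca | hcb
    · have : 0 ≤ α := by omega
      nlinarith [mul_nonneg this (by omega : (0:ℤ) ≤ b),
        mul_nonneg (by omega : (0:ℤ) ≤ β + 1) (by omega : (0:ℤ) ≤ a)]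
    · have : 0 ≤ β := by omega
      nlinarith [mul_nonneg this (by omega : (0:ℤ) ≤ a),
        mul_nonneg (by omega : (0:ℤ) ≤ α + 1) (by omega : (0:ℤ) ≤ b)]
end

section
/- Let a, b ≥ 2, and let l(u) = (u−λ₁)⋯(u−λ_a) and m(v) = (v−μ₁)⋯(v−μ_b) with all λ_i distinct and nonzero and all μ_j distinct and nonzero. Then there exists a polynomial h(u) of degree a, with no multiple roots, sharing no root with l(u), such that the affine curve C = {(u,v) ∈ ℂ² : l(u)v^b − h(u)m(v) = 0} is smooth, i.e., at no point of C do both partial derivatives of f(u,v) = l(u)v^b − h(u)m(v) vanish. -/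
open Polynomial in
/-- For `l(u) = ∏ (u - λᵢ)` and `m(v) = ∏ (v - μⱼ)` with the `λᵢ` distinct and nonzero and
the `μⱼ` distinct and nonzero (`a, b ≥ 2`), there exists `h(u)` of degree `a`, squarefree,
sharing no root with `l`, such that the affine curve `l(u)v^b - h(u)m(v) = 0` is smooth:
at no point of the curve do both partial derivatives vanish. -/
theorem stmt_13 (a b : ℕ) (ha : 2 ≤ a) (hb : 2 ≤ b)
    (lam : Fin a → ℂ) (mu : Fin b → ℂ)
    (hlam : Function.Injective lam) (hmu : Function.Injective mu)
    (hlam0 : ∀ i, lam i ≠ 0) (hmu0 : ∀ j, mu j ≠ 0) :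
    ∃ h : Polynomial ℂ, h.degree = a ∧ Squarefree h ∧
      (∀ x : ℂ, h.eval x = 0 → (∏ i, (X - C (lam i))).eval x ≠ 0) ∧
      ∀ u v : ℂ,
        (∏ i, (X - C (lam i))).eval u * v ^ b
          - h.eval u * (∏ j, (X - C (mu j))).eval v = 0 →
        ¬(((derivative (∏ i, (X - C (lam i)))).eval u * v ^ b
              - (derivative h).eval u * (∏ j, (X - C (mu j))).eval v = 0) ∧
          ((∏ i, (X - C (lam i))).eval u * ((b : ℂ) * v ^ (b - 1))
              - h.eval u * (derivative (∏ j, (X - C (mu j)))).eval v = 0)) := by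
  set l : ℂ[X] := ∏ i, (X - C (lam i)) with hl
  set m : ℂ[X] := ∏ j, (X - C (mu j)) with hm
  -- basic facts
  have hld : l.degree = a := by
    rw [hl, degree_prod]
    simp [degree_X_sub_C]
  have hlnd : l.natDegree = a := natDegree_eq_of_degree_eq_some hld
  have hdl : derivative l ≠ 0 := by
    intro hd
    have := natDegree_eq_zero_of_derivative_eq_zero hd
    omega
  have hlsep : l.Separable := separable_prod_X_sub_C_iff.2 hlam
  have hmsep : m.Separable := separable_prod_X_sub_C_iff.2 hmu
  have hm0 : m.eval 0 ≠ 0 := by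
    rw [hm, eval_prod]
    refine Finset.prod_ne_zero_iff.2 fun j _ => ?_
    simpa using hmu0 j
  have hbC : ((b : ℕ) : ℂ) ≠ 0 := Nat.cast_ne_zero.mpr (by omega)
  have aeval_eq : ∀ (p : ℂ[X]) (x : ℂ), aeval x p = p.eval x := fun p x => by
    simp [coe_aeval_eq_eval]
  set q : ℂ[X] := X * derivative m - C ((b : ℕ) : ℂ) * m with hq
  have hq0 : q ≠ 0 := by
    intro h0
    have h1 : q.eval 0 = 0 := by rw [h0]; simp
    rw [hq] at h1
    simp only [eval_sub, eval_mul, eval_X, eval_C, zero_mul, zero_sub, neg_eq_zero] at h1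
    exact (mul_ne_zero hbC hm0) h1
  -- the finite bad set
  set S1 : Finset ℂ := ((derivative l).roots.toFinset).image fun u => l.eval u with hS1
  set S2 : Finset ℂ :=
    (((derivative l).roots.toFinset) ×ˢ (q.roots.toFinset)).image
      fun p => l.eval p.1 - l.eval p.1 * p.2 ^ b / m.eval p.2 with hS2
  obtain ⟨c, hc⟩ := Infinite.exists_notMem_finset (insert (0 : ℂ) (S1 ∪ S2))
  have hc0 : c ≠ 0 := fun h => hc (by simp [h])
  have hcS1 : ∀ x : ℂ, (derivative l).eval x = 0 → l.eval x ≠ c := by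
    intro x hx hcx
    exact hc (Finset.mem_insert_of_mem (Finset.mem_union_left _
      (Finset.mem_image.2 ⟨x, Multiset.mem_toFinset.2 ((mem_roots hdl).2 hx), hcx⟩)))
  refine ⟨l - C c, ?_, ?_, ?_, ?_⟩
  · rw [degree_sub_C (by rw [hld]; exact_mod_cast (by omega : 0 < a))]
    exact hld
  · -- squarefree
    refine Separable.squarefree ?_
    rw [separable_def, derivative_sub, derivative_C, sub_zero,
      Polynomial.isCoprime_iff_aeval_ne_zero_of_isAlgClosed (k := ℂ) ℂ]
    intro x
    by_contra hx
    push_neg at hx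
    obtain ⟨h1, h2⟩ := hx
    rw [aeval_eq, eval_sub, eval_C, sub_eq_zero] at h1
    rw [aeval_eq] at h2
    exact hcS1 x h2 h1
  · -- no common root
    intro x hx hlx
    rw [eval_sub, eval_C, hlx, zero_sub, neg_eq_zero] at hx
    exact hc0 hx
  · -- smoothness
    intro u v hf hpartials
    obtain ⟨h1, h2⟩ := hpartials
    obtain ⟨b', rfl⟩ : ∃ b', b = b' + 1 := ⟨b - 1, by omega⟩
    rw [derivative_sub, derivative_C, sub_zero] at h1
    rw [eval_sub, eval_C] at hf h2
    set L := l.eval u with hLdef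
    set M := m.eval v with hMdef
    set L' := (derivative l).eval u with hL'def
    set M' := (derivative m).eval v with hM'def
    -- hf : L * v^(b'+1) - (L - c) * M = 0
    -- h1 : L' * v^(b'+1) - L' * M = 0
    -- h2 : L * ((b'+1) * v^(b'+1-1)) - (L - c) * M' = 0
    rw [show b' + 1 - 1 = b' from rfl] at h2
    have hvM0 : ∀ w : ℂ, m.eval w = 0 → w ≠ 0 := by
      intro w hw h0; rw [h0] at hw; exact hm0 hw
    have hfac : L' * (v ^ (b' + 1) - M) = 0 := by linear_combination h1
    rcases mul_eq_zero.1 hfac with hL' | hvb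
    · -- l'(u) = 0
      have hLc : L - c ≠ 0 := by
        intro h0
        exact hcS1 u hL' (by linear_combination h0)
      have hv0 : v ≠ 0 := by
        intro h0
        rw [h0] at hf hMdef
        rw [zero_pow (by omega : b' + 1 ≠ 0)] at hf
        have : (L - c) * M = 0 := by linear_combination -hf
        rcases mul_eq_zero.1 this with h | h
        · exact hLc h
        · exact hm0 (hMdef ▸ h)
      have hM : M ≠ 0 := by
        intro h0
        -- then L * v^b = 0 from hf, so L = 0
        rw [h0] at hf
        have hLv : L * v ^ (b' + 1) = 0 := by linear_combination hf
        have hL : L = 0 := by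
          rcases mul_eq_zero.1 hLv with h | h
          · exact h
          · exact absurd h (pow_ne_zero _ hv0)
        -- h2 gives c * M' = 0 hence M' = 0, contradicting separability of m
        have hM' : M' = 0 := by
          rw [hL] at h2
          have : c * M' = 0 := by linear_combination h2
          rcases mul_eq_zero.1 this with h | h
          · exact absurd h hc0
          · exact h
        have := (Polynomial.isCoprime_iff_aeval_ne_zero_of_isAlgClosed (k := ℂ) ℂ m
          (derivative m)).1 hmsep v
        rcases this with h | h <;> rw [aeval_eq] at h
        · exact h (hMdef ▸ h0)
        · exact h (hM'def ▸ hM')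
      have hL : L ≠ 0 := by
        intro h0
        rw [h0] at hf
        have : c * M = 0 := by linear_combination hf
        rcases mul_eq_zero.1 this with h | h
        · exact hc0 h
        · exact hM h
      -- derive q.eval v = 0
      have hkey : L * v ^ b' * (v * M' - ((b' + 1 : ℕ) : ℂ) * M) = 0 := by
        push_cast
        push_cast at h2
        linear_combination M' * hf - M * h2
      have hqv : q.eval v = 0 := by
        have h3 : v * M' - ((b' + 1 : ℕ) : ℂ) * M = 0 := by
          rcases mul_eq_zero.1 hkey with h | h
          · rcases mul_eq_zero.1 h with h' | h'
            · exact absurd h' hL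
            · exact absurd h' (pow_ne_zero _ hv0)
          · exact h
        rw [hq]
        simp only [eval_sub, eval_mul, eval_X, eval_C]
        push_cast
        push_cast at h3
        linear_combination h3
      -- c is in the bad set S2
      have hceq : c = L - L * v ^ (b' + 1) / M := by
        field_simp
        linear_combination hf
      refine hc (Finset.mem_insert_of_mem (Finset.mem_union_right _
        (Finset.mem_image.2 ⟨(u, v), Finset.mem_product.2
          ⟨Multiset.mem_toFinset.2 ((mem_roots hdl).2 hL'),
           Multiset.mem_toFinset.2 ((mem_roots hq0).2 hqv)⟩, ?_⟩)))
      show eval u l - eval u l * v ^ (b' + 1) / eval v m = c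
      rw [← hLdef, ← hMdef]
      exact hceq.symm
    · -- v^b = M
      have hMc : c * M = 0 := by linear_combination hf - L * hvb
      have hM0' : M = 0 := by
        rcases mul_eq_zero.1 hMc with h | h
        · exact absurd h hc0
        · exact h
      have hvb0 : v ^ (b' + 1) = 0 := by linear_combination hvb + hM0'
      have hv : v = 0 := pow_eq_zero_iff (by omega) |>.1 hvb0
      have hme : eval v m = 0 := by rw [← hMdef]; exact hM0'
      rw [hv] at hme
      exact hm0 hme
end
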